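/- Let C be a complete lattice and let f : C → ℘∨(C) be an H-monotone multivalued function (each value f(c) contains its supremum). Then f has a greatest fixed point, i.e., Fix(f) = {x ∈ C : x ∈ f(x)} has a greatest element; moreover, gfp(f) = ⋀_{α ∈ Ord} f∨^α(⊤), where f∨(c) = ⋁ f(c) and f∨^α denotes the α-th transfinite iterate (with infima taken at limit stages) of f∨ starting from the top element ⊤ of C. -/

import Mathlib

universe u

/-- Hoare preorder on subsets: `X ⪯_H Y` iff every `x ∈ X` is below some `y ∈ Y`. -/
def HoareLE {β : Type u} [LE β] (X Y : Set β) : Prop := ∀ x ∈ X, ∃ y ∈ Y, x ≤ y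

/-- Downward transfinite iterates of `g` starting from `⊤`:
`g^0 = ⊤`, `g^(β+1) = g (g^β)`, and infima are taken at limit ordinals. -/
noncomputable def downIter {β : Type u} [CompleteLattice β] (g : β → β) (o : Ordinal.{u}) : β :=
  Ordinal.limitRecOn (motive := fun _ => β) o ⊤ (fun _ ih => g ih)
    (fun o _ ih => ⨅ b : Set.Iio o, ih b.1 b.2)

theorem downIter_zero {β : Type u} [CompleteLattice β] (g : β → β) :
    downIter g 0 = ⊤ := Ordinal.limitRecOn_zero _ _ _

theorem downIter_succ {β : Type u} [CompleteLattice β] (g : β → β) (o : Ordinal.{u}) :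
    downIter g (Order.succ o) = g (downIter g o) := Ordinal.limitRecOn_succ _ _ _ _

theorem downIter_limit {β : Type u} [CompleteLattice β] (g : β → β) (o : Ordinal.{u})
    (h : Order.IsSuccLimit o) : downIter g o = ⨅ b : Set.Iio o, downIter g b.1 :=
  Ordinal.limitRecOn_limit _ _ _ _ h

theorem le_downIter {β : Type u} [CompleteLattice β] {g : β → β} (hg : Monotone g)
    {x : β} (hx : x ≤ g x) : ∀ o : Ordinal.{u}, x ≤ downIter g o := by
  intro o
  induction o using Ordinal.limitRecOn with
  | zero => rw [downIter_zero]; exact le_top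
  | add_one o ih => rw [Ordinal.add_one_eq_succ, downIter_succ]; exact hx.trans (hg ih)
  | limit o ho ih => rw [downIter_limit g o ho]; exact le_iInf fun b => ih b.1 b.2

theorem g_downIter_le {β : Type u} [CompleteLattice β] {g : β → β} (hg : Monotone g) :
    ∀ o : Ordinal.{u}, g (downIter g o) ≤ downIter g o := by
  intro o
  induction o using Ordinal.limitRecOn with
  | zero => rw [downIter_zero]; exact le_top
  | add_one o ih => rw [Ordinal.add_one_eq_succ, downIter_succ]; exact hg ih
  | limit o ho ih =>
    rw [downIter_limit g o ho]
    refine le_iInf fun b => ?_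
    exact (hg (iInf_le _ b)).trans (ih b.1 b.2)

theorem downIter_antitone {β : Type u} [CompleteLattice β] {g : β → β} (hg : Monotone g) :
    Antitone (downIter g) := by
  intro o' o h
  induction o using Ordinal.limitRecOn with
  | zero => rw [nonpos_iff_eq_zero.mp h]
  | add_one o ih =>
    rw [Ordinal.add_one_eq_succ] at h ⊢
    rcases eq_or_lt_of_le h with rfl | hlt
    · exact le_rfl
    · rw [downIter_succ]
      exact (g_downIter_le hg o).trans (ih (Order.lt_succ_iff.mp hlt))
  | limit o ho ih =>
    rcases eq_or_lt_of_le h with rfl | hlt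
    · exact le_rfl
    · rw [downIter_limit g o ho]
      exact iInf_le (fun b : Set.Iio o => downIter g b.1) ⟨o', hlt⟩

/-- an H-monotone multivalued function `f : C → ℘∨(C)` on a complete
lattice has a greatest fixed point, namely `⋀_{α ∈ Ord} f∨^α(⊤)` where `f∨ c = ⋁ f c`. -/
theorem multivalued_gfp {β : Type u} [CompleteLattice β] (f : β → Set β)
    (hjoin : ∀ c, sSup (f c) ∈ f c)
    (hmono : ∀ x y : β, x ≤ y → HoareLE (f x) (f y)) :
    IsGreatest {x | x ∈ f x} (⨅ o : Ordinal.{u}, downIter (fun c => sSup (f c)) o) := by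
  set g : β → β := fun c => sSup (f c) with hg_def
  have hg : Monotone g := by
    intro x y hxy
    refine sSup_le fun a ha => ?_
    obtain ⟨b, hb, hab⟩ := hmono x y hxy a ha
    exact hab.trans (le_sSup hb)
  -- downIter is not injective
  have hninj : ¬ Function.Injective (downIter g) := by
    intro hinj
    exact not_small_ordinal.{u,u} (small_of_injective hinj)
  rw [Function.not_injective_iff] at hninj
  obtain ⟨a, b, hab, hne⟩ := hninj
  wlog hlt : a < b generalizing a b
  · exact this b a hab.symm (Ne.symm hne) (hne.lt_or_gt.resolve_left hlt)
  -- stabilization: g (downIter g a) = downIter g a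
  have hfix : g (downIter g a) = downIter g a := by
    have h1 : downIter g (Order.succ a) ≤ downIter g a :=
      downIter_antitone hg (Order.le_succ a)
    have h2 : downIter g a ≤ downIter g (Order.succ a) := by
      calc downIter g a = downIter g b := hab
        _ ≤ downIter g (Order.succ a) := downIter_antitone hg (Order.succ_le_of_lt hlt)
    rw [downIter_succ] at h1 h2
    exact le_antisymm h1 h2
  set m := downIter g a with hm
  have hinf : (⨅ o : Ordinal.{u}, downIter g o) = m := by
    refine le_antisymm (iInf_le _ a) (le_iInf fun o => le_downIter hg hfix.ge o)
  constructor
  · show (⨅ o : Ordinal.{u}, downIter g o) ∈ f _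
    rw [hinf]
    have h := hjoin m
    rwa [show sSup (f m) = m from hfix] at h
  · intro y hy
    rw [hinf]
    have : y ≤ g y := le_sSup hy
    exact le_downIter hg this a
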